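/- For A₁,…,Aₙ ∈ ℳⁿ, one has D(A₁,…,Aₙ) > 0 if and only if dim(P(A_{i₁}) + … + P(A_{i_k})) ≥ k for each choice of indices 1 ≤ i₁ < … < i_k ≤ n and for all k ∈ {1,…,n}. -/

import Mathlib

open Matrix Finset Submodule Module

section Rado

variable {V : Type*} [AddCommGroup V] [Module ℝ V] [FiniteDimensional ℝ V] [DecidableEq V]

/-- span of the union of a family of finsets over a finset of indices -/
noncomputable def spn {n : ℕ} (S : Fin n → Finset V) (s : Finset (Fin n)) : Submodule ℝ V :=
  Submodule.span ℝ (⋃ i ∈ s, (S i : Set V))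

lemma rado_key {n : ℕ} (S : Fin n → Finset V) (i : Fin n) {x y : V}
    (hx : x ∈ S i) (hy : y ∈ S i) (hxy : x ≠ y)
    (hC : ∀ s : Finset (Fin n), s.card ≤ finrank ℝ (spn S s)) :
    (∀ s : Finset (Fin n), s.card ≤ finrank ℝ (spn (Function.update S i (S i \ {x})) s)) ∨
    (∀ s : Finset (Fin n), s.card ≤ finrank ℝ (spn (Function.update S i (S i \ {y})) s)) := by
  by_contra hcon
  push_neg at hcon
  obtain ⟨⟨P, hP⟩, ⟨Q, hQ⟩⟩ := hcon
  set Sx := Function.update S i (S i \ {x}) with hSx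
  set Sy := Function.update S i (S i \ {y}) with hSy
  have hiP : i ∈ P := by
    by_contra hiP
    have heq : spn S P = spn Sx P := by
      unfold spn
      congr 1
      refine Set.iUnion₂_congr fun j hj => ?_
      rw [hSx, Function.update_of_ne (by rintro rfl; exact hiP hj)]
    have := hC P
    rw [heq] at this
    omega
  have hiQ : i ∈ Q := by
    by_contra hiQ
    have heq : spn S Q = spn Sy Q := by
      unfold spn
      congr 1
      refine Set.iUnion₂_congr fun j hj => ?_
      rw [hSy, Function.update_of_ne (by rintro rfl; exact hiQ hj)]
    have := hC Q
    rw [heq] at this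
    omega
  set U := spn Sx P
  set W := spn Sy Q
  have hUW : spn S (P ∪ Q) ≤ U ⊔ W := by
    refine Submodule.span_le.2 ?_
    rintro z hz
    simp only [Set.mem_iUnion, exists_prop] at hz
    obtain ⟨j, hj, hzj⟩ := hz
    by_cases hji : j = i
    · subst hji
      rcases ne_or_eq z x with hzx | rfl
      · exact Submodule.mem_sup_left (Submodule.subset_span (by
          simp only [Set.mem_iUnion, exists_prop]
          exact ⟨j, hiP, by simp [hSx, Finset.mem_sdiff, hzj, hzx]⟩))
      · exact Submodule.mem_sup_right (Submodule.subset_span (by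
          simp only [Set.mem_iUnion, exists_prop]
          exact ⟨j, hiQ, by simp [hSy, Finset.mem_sdiff, hzj, hxy]⟩))
    · rcases Finset.mem_union.1 hj with hjP | hjQ
      · exact Submodule.mem_sup_left (Submodule.subset_span (by
          simp only [Set.mem_iUnion, exists_prop]
          exact ⟨j, hjP, by simp [hSx, Function.update_of_ne hji, hzj]⟩))
      · exact Submodule.mem_sup_right (Submodule.subset_span (by
          simp only [Set.mem_iUnion, exists_prop]
          exact ⟨j, hjQ, by simp [hSy, Function.update_of_ne hji, hzj]⟩))
  have hInf : spn S ((P ∩ Q).erase i) ≤ U ⊓ W := by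
    refine Submodule.span_le.2 ?_
    rintro z hz
    simp only [Set.mem_iUnion, exists_prop] at hz
    obtain ⟨j, hj, hzj⟩ := hz
    obtain ⟨hji, hjPQ⟩ := Finset.mem_erase.1 hj
    refine ⟨Submodule.subset_span ?_, Submodule.subset_span ?_⟩
    · simp only [Set.mem_iUnion, exists_prop]
      exact ⟨j, Finset.mem_inter.1 hjPQ |>.1, by simp [hSx, Function.update_of_ne hji, hzj]⟩
    · simp only [Set.mem_iUnion, exists_prop]
      exact ⟨j, Finset.mem_inter.1 hjPQ |>.2, by simp [hSy, Function.update_of_ne hji, hzj]⟩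
  have h1 : finrank ℝ U + 1 ≤ P.card := hP
  have h2 : finrank ℝ W + 1 ≤ Q.card := hQ
  have h3 : (P ∪ Q).card ≤ finrank ℝ (U ⊔ W : Submodule ℝ V) :=
    le_trans (hC _) (Submodule.finrank_mono hUW)
  have h4 : (P ∩ Q).card ≤ finrank ℝ (U ⊓ W : Submodule ℝ V) + 1 := by
    have := le_trans (hC ((P ∩ Q).erase i)) (Submodule.finrank_mono hInf)
    have hcard : ((P ∩ Q).erase i).card = (P ∩ Q).card - 1 :=
      Finset.card_erase_of_mem (Finset.mem_inter.2 ⟨hiP, hiQ⟩)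
    have hpos : 1 ≤ (P ∩ Q).card := Finset.card_pos.2 ⟨i, Finset.mem_inter.2 ⟨hiP, hiQ⟩⟩
    omega
  have h5 : finrank ℝ (U ⊔ W : Submodule ℝ V) + finrank ℝ (U ⊓ W : Submodule ℝ V)
      = finrank ℝ U + finrank ℝ W := Submodule.finrank_sup_add_finrank_inf_eq U W
  have h6 : (P ∪ Q).card + (P ∩ Q).card = P.card + Q.card :=
    Finset.card_union_add_card_inter P Q
  omega

/-- Rado's theorem for vector configurations. -/
lemma rado_aux (N : ℕ) : ∀ {n : ℕ} (S : Fin n → Finset V), (∑ i, (S i).card) ≤ N →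
    (∀ s : Finset (Fin n), s.card ≤ finrank ℝ (spn S s)) →
    ∃ v : Fin n → V, (∀ i, v i ∈ S i) ∧ LinearIndependent ℝ v := by
  induction N with
  | zero =>
    intro n S hN hC
    rcases Nat.eq_zero_or_pos n with rfl | hn
    · exact ⟨Fin.elim0, fun i => i.elim0, linearIndependent_empty_type⟩
    · exfalso
      have i : Fin n := ⟨0, hn⟩
      have hSi : S i = ∅ := Finset.card_eq_zero.1 (Nat.le_zero.1
        (le_trans (Finset.single_le_sum (f := fun j => (S j).card)
          (fun _ _ => Nat.zero_le _) (Finset.mem_univ i)) hN))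
      have h1 := hC {i}
      have hbot : spn S {i} = ⊥ := by
        unfold spn
        simp [hSi]
      rw [hbot] at h1
      simp [finrank_bot] at h1
  | succ N ih =>
    intro n S hN hC
    by_cases hbig : ∃ i : Fin n, ∃ x ∈ S i, ∃ y ∈ S i, x ≠ y
    · obtain ⟨i, x, hx, y, hy, hxy⟩ := hbig
      have hcard : ∀ z ∈ S i, (∑ j, ((Function.update S i (S i \ {z})) j).card) ≤ N := by
        intro z hz
        have : (∑ j, ((Function.update S i (S i \ {z})) j).card)
            = (∑ j, (S j).card) - 1 := by
          rw [← Finset.sum_erase_add Finset.univ _ (Finset.mem_univ i),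
              ← Finset.sum_erase_add Finset.univ (fun j => (S j).card) (Finset.mem_univ i)]
          have hrest : ∑ j ∈ Finset.univ.erase i, ((Function.update S i (S i \ {z})) j).card
              = ∑ j ∈ Finset.univ.erase i, (S j).card := by
            refine Finset.sum_congr rfl fun j hj => ?_
            rw [Function.update_of_ne (Finset.mem_erase.1 hj).1]
          rw [hrest, Function.update_self, Finset.card_sdiff_of_subset (by simpa using hz)]
          have : 1 ≤ (S i).card := Finset.card_pos.2 ⟨z, hz⟩
          simp only [Finset.card_singleton]
          omega
        have hpos : 1 ≤ ∑ j, (S j).card :=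
          le_trans (Finset.card_pos.2 ⟨x, hx⟩)
            (Finset.single_le_sum (f := fun j => (S j).card) (fun _ _ => Nat.zero_le _)
              (Finset.mem_univ i))
        omega
      rcases rado_key S i hx hy hxy hC with hCx | hCy
      · obtain ⟨v, hv, hli⟩ := ih _ (hcard x hx) hCx
        refine ⟨v, fun j => ?_, hli⟩
        have := hv j
        by_cases hji : j = i
        · subst hji; rw [Function.update_self] at this; exact Finset.sdiff_subset this
        · rwa [Function.update_of_ne hji] at this
      · obtain ⟨v, hv, hli⟩ := ih _ (hcard y hy) hCy
        refine ⟨v, fun j => ?_, hli⟩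
        have := hv j
        by_cases hji : j = i
        · subst hji; rw [Function.update_self] at this; exact Finset.sdiff_subset this
        · rwa [Function.update_of_ne hji] at this
    · push_neg at hbig
      have hone : ∀ i, ∃ a, S i = {a} := by
        intro i
        have hne : (S i).Nonempty := by
          by_contra hne
          rw [Finset.not_nonempty_iff_eq_empty] at hne
          have := hC {i}
          have hbot : spn S {i} = ⊥ := by unfold spn; simp [hne]
          rw [hbot] at this
          simp at this
        obtain ⟨a, ha⟩ := hne
        refine ⟨a, Finset.eq_singleton_iff_unique_mem.2 ⟨ha, fun b hb => hbig i b hb a ha⟩⟩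
      choose v hv using hone
      refine ⟨v, fun i => by rw [hv i]; exact Finset.mem_singleton_self _, ?_⟩
      rw [linearIndependent_iff_card_eq_finrank_span]
      have hrange : (⋃ i ∈ (Finset.univ : Finset (Fin n)), ((S i : Set V))) = Set.range v := by
        ext z
        simp only [Set.mem_iUnion, Set.mem_range, exists_prop]
        constructor
        · rintro ⟨i, -, hz⟩
          rw [hv i] at hz
          simp only [Finset.coe_singleton, Set.mem_singleton_iff] at hz
          exact ⟨i, hz.symm⟩
        · rintro ⟨i, rfl⟩
          exact ⟨i, Finset.mem_univ i, by rw [hv i]; simp⟩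
      have hge : n ≤ finrank ℝ (span ℝ (Set.range v)) := by
        have := hC Finset.univ
        unfold spn at this
        rwa [hrange, Finset.card_univ, Fintype.card_fin] at this
      have hle : (Set.range v).finrank ℝ ≤ n := by
        simpa using finrank_range_le_card (R := ℝ) v
      rw [Set.finrank] at hle
      rw [Set.finrank]
      simp only [Fintype.card_fin]
      omega

end Rado

section Expansion

lemma expansion {n : ℕ} (B : Fin n → Matrix (Fin n) (Fin n) ℝ) (hB : ∀ i, (B i)ᵀ = B i) :
    ∑ σ : Equiv.Perm (Fin n), (Matrix.of fun i j => (B (σ j) * B (σ j)) i j).det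
      = ∑ g : Fin n → Fin n, ((Matrix.of fun r i => B i r (g i)).det) ^ 2 := by
  have hsym : ∀ k, (B k * B k)ᵀ = B k * B k := fun k => by
    rw [Matrix.transpose_mul, hB]
  have h1 : ∀ σ : Equiv.Perm (Fin n),
      (Matrix.of fun i j => (B (σ j) * B (σ j)) i j).det
        = (Matrix.of fun i j => (B (σ i) * B (σ i)) i j).det := by
    intro σ
    rw [← Matrix.det_transpose]
    congr 1
    ext i j
    show (B (σ i) * B (σ i)) j i = (B (σ i) * B (σ i)) i j
    conv_lhs => rw [← hsym (σ i)]
    rfl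
  have h2 : ∀ σ : Equiv.Perm (Fin n),
      (Matrix.of fun i j => (B (σ i) * B (σ i)) i j).det
        = ∑ f : Fin n → Fin n,
            (∏ i, B (σ i) i (f i)) * (Matrix.of fun i j => B (σ i) (f i) j).det := by
    intro σ
    have hrow : (Matrix.of fun i j => (B (σ i) * B (σ i)) i j)
        = Matrix.of (fun i => ∑ k, (B (σ i) i k) • (B (σ i) k)) := by
      ext i j
      simp [Matrix.mul_apply, Finset.sum_apply]
    rw [hrow]
    refine (MultilinearMap.map_sum Matrix.detRowAlternating.toMultilinearMap
      (g := fun i k => (B (σ i) i k) • (B (σ i) k))).trans ?_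
    refine Finset.sum_congr rfl fun f _ => ?_
    exact (MultilinearMap.map_smul_univ Matrix.detRowAlternating.toMultilinearMap
      (fun i => B (σ i) i (f i)) (fun i => B (σ i) (f i)))
  calc ∑ σ : Equiv.Perm (Fin n), (Matrix.of fun i j => (B (σ j) * B (σ j)) i j).det
      = ∑ σ : Equiv.Perm (Fin n), ∑ f : Fin n → Fin n,
          (∏ i, B (σ i) i (f i)) * (Matrix.of fun i j => B (σ i) (f i) j).det := by
        refine Finset.sum_congr rfl fun σ _ => ?_
        rw [h1, h2]
    _ = ∑ σ : Equiv.Perm (Fin n), ∑ g : Fin n → Fin n,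
          (∏ i, B (σ i) i (g (σ i))) * (Matrix.of fun i j => B (σ i) (g (σ i)) j).det := by
        refine Finset.sum_congr rfl fun σ _ => ?_
        exact (Equiv.sum_comp (Equiv.arrowCongr σ.symm (Equiv.refl (Fin n)))
          (fun f => (∏ i, B (σ i) i (f i)) * (Matrix.of fun i j => B (σ i) (f i) j).det)).symm
    _ = ∑ g : Fin n → Fin n, ∑ σ : Equiv.Perm (Fin n),
          (∏ i, B (σ i) i (g (σ i))) * (Matrix.of fun i j => B (σ i) (g (σ i)) j).det :=
        Finset.sum_comm
    _ = ∑ g : Fin n → Fin n, ((Matrix.of fun r i => B i r (g i)).det) ^ 2 := by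
        refine Finset.sum_congr rfl fun g _ => ?_
        have hprod : ∀ σ : Equiv.Perm (Fin n),
            (∏ i, B (σ i) i (g (σ i))) = ∏ i, B i (σ⁻¹ i) (g i) := by
          intro σ
          rw [← Equiv.prod_comp σ (fun i => B i (σ⁻¹ i) (g i))]
          simp
        have hdet : ∀ σ : Equiv.Perm (Fin n),
            (Matrix.of fun i j => B (σ i) (g (σ i)) j).det
              = (Equiv.Perm.sign σ : ℝ) * (Matrix.of fun i j => B i (g i) j).det := by
          intro σ
          have : (Matrix.of fun i j => B (σ i) (g (σ i)) j)
              = (Matrix.of fun i j => B i (g i) j).submatrix σ id := rfl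
          rw [this, Matrix.det_permute]
        have hRg : (Matrix.of fun i j => B i (g i) j).det
            = (Matrix.of fun r i => B i r (g i)).det := by
          rw [← Matrix.det_transpose (Matrix.of fun r i => B i r (g i))]
          congr 1
          ext i j
          show B i (g i) j = B i j (g i)
          conv_lhs => rw [← hB i]
          rfl
        calc ∑ σ : Equiv.Perm (Fin n),
              (∏ i, B (σ i) i (g (σ i))) * (Matrix.of fun i j => B (σ i) (g (σ i)) j).det
            = (Matrix.of fun r i => B i r (g i)).det * ∑ σ : Equiv.Perm (Fin n),
                (Equiv.Perm.sign σ : ℝ) * ∏ i, B i (σ⁻¹ i) (g i) := by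
              rw [Finset.mul_sum]
              refine Finset.sum_congr rfl fun σ _ => ?_
              rw [hprod, hdet, hRg]
              ring
          _ = (Matrix.of fun r i => B i r (g i)).det * ∑ σ : Equiv.Perm (Fin n),
                (Equiv.Perm.sign σ : ℝ) * ∏ i, B i (σ i) (g i) := by
              congr 1
              refine Fintype.sum_equiv (Equiv.inv (Equiv.Perm (Fin n)))
                (fun σ => (Equiv.Perm.sign σ : ℝ) * ∏ i, B i (σ⁻¹ i) (g i))
                (fun σ => (Equiv.Perm.sign σ : ℝ) * ∏ i, B i (σ i) (g i))
                (fun σ => ?_)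
              simp
          _ = ((Matrix.of fun r i => B i r (g i)).det) ^ 2 := by
              have hfin : ∑ σ : Equiv.Perm (Fin n),
                  (Equiv.Perm.sign σ : ℝ) * ∏ i, B i (σ i) (g i)
                    = (Matrix.of fun r i => B i r (g i)).det := by
                rw [Matrix.det_apply']
                rfl
              rw [hfin]
              ring

end Expansion

section Range

open scoped MatrixOrder in
noncomputable def Matrix.PosSemidef.sqrt {n : ℕ} {A : Matrix (Fin n) (Fin n) ℝ}
    (_hA : A.PosSemidef) : Matrix (Fin n) (Fin n) ℝ := CFC.sqrt A

open scoped MatrixOrder in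
theorem Matrix.PosSemidef.posSemidef_sqrt {n : ℕ} {A : Matrix (Fin n) (Fin n) ℝ}
    (hA : A.PosSemidef) : hA.sqrt.PosSemidef :=
  (CFC.sqrt_nonneg A).posSemidef

open scoped MatrixOrder in
theorem Matrix.PosSemidef.sqrt_mul_self {n : ℕ} {A : Matrix (Fin n) (Fin n) ℝ}
    (hA : A.PosSemidef) : hA.sqrt * hA.sqrt = A :=
  CFC.sqrt_mul_sqrt_self A hA.nonneg

/-- The column space of a psd matrix equals the column space of its square root. -/
lemma range_toLin'_eq_span_sqrt_cols {n : ℕ} {A : Matrix (Fin n) (Fin n) ℝ}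
    (hA : A.PosSemidef) :
    LinearMap.range (Matrix.toLin' A) = Submodule.span ℝ (Set.range hA.sqrtᵀ) := by
  have hBt : hA.sqrtᵀ = hA.sqrt := by
    have := hA.posSemidef_sqrt.isHermitian
    rwa [Matrix.IsHermitian, Matrix.conjTranspose_eq_transpose_of_trivial] at this
  have hBB : hA.sqrt * hA.sqrt = A := hA.sqrt_mul_self
  rw [Matrix.range_toLin']
  have hle : Submodule.span ℝ (Set.range Aᵀ) ≤ Submodule.span ℝ (Set.range hA.sqrtᵀ) := by
    rw [Submodule.span_le]
    rintro _ ⟨j, rfl⟩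
    have : Aᵀ j = ∑ k, (hA.sqrt k j) • hA.sqrtᵀ k := by
      funext i
      have hm : A i j = (hA.sqrt * hA.sqrt) i j := by rw [hBB]
      calc Aᵀ j i = A i j := rfl
        _ = (hA.sqrt * hA.sqrt) i j := hm
        _ = (∑ k, (hA.sqrt k j) • hA.sqrtᵀ k) i := by
            simp [Matrix.mul_apply, Finset.sum_apply, mul_comm]
    rw [this]
    exact Submodule.sum_mem _ fun k _ =>
      Submodule.smul_mem _ _ (Submodule.subset_span ⟨k, rfl⟩)
  refine Submodule.eq_of_le_of_finrank_le hle ?_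
  have e1 : finrank ℝ (Submodule.span ℝ (Set.range hA.sqrtᵀ)) = hA.sqrt.rank :=
    (Matrix.rank_eq_finrank_span_cols _).symm
  have e2 : finrank ℝ (Submodule.span ℝ (Set.range Aᵀ)) = A.rank :=
    (Matrix.rank_eq_finrank_span_cols _).symm
  rw [e1, show finrank ℝ (Submodule.span ℝ (Set.range A.col)) = A.rank from e2]
  have : A.rank = hA.sqrt.rank := by
    conv_lhs => rw [← hBB]
    conv_lhs => rw [show hA.sqrt * hA.sqrt = hA.sqrt * hA.sqrtᵀ by rw [hBt]]
    exact Matrix.rank_self_mul_transpose _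
  omega

end Range

/-- The mixed discriminant of `n` real `n × n` matrices:
`D(A₁,…,Aₙ) = (1/n!) Σ_{σ ∈ S(n)} det(M_σ)`, where the `j`-th column of `M_σ`
is the `j`-th column of `A_{σ(j)}`. -/
noncomputable def mixedDisc (n : ℕ) (A : Fin n → Matrix (Fin n) (Fin n) ℝ) : ℝ :=
  ((n.factorial : ℝ))⁻¹ *
    ∑ σ : Equiv.Perm (Fin n), (Matrix.of fun i j => A (σ j) i j).det

/-- For positive semidefinite matrices `A₁,…,Aₙ`, the mixed discriminant
`D(A₁,…,Aₙ)` is positive if and only if for every nonempty choice of indices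
`i₁ < … < i_k` one has `dim (P(A_{i₁}) + … + P(A_{i_k})) ≥ k`, where `P(A)` is
the column space of `A`. -/
theorem mixedDisc_pos_iff_dim {n : ℕ} (A : Fin n → Matrix (Fin n) (Fin n) ℝ)
    (hA : ∀ i, (A i).PosSemidef) :
    0 < mixedDisc n A ↔
      ∀ s : Finset (Fin n), s.Nonempty →
        s.card ≤ Module.finrank ℝ
          ↥(⨆ i ∈ s, LinearMap.range (Matrix.toLin' (A i))) := by
  classical
  set B : Fin n → Matrix (Fin n) (Fin n) ℝ := fun i => (hA i).sqrt with hBdef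
  have hBt : ∀ i, (B i)ᵀ = B i := by
    intro i
    have := (hA i).posSemidef_sqrt.isHermitian
    rwa [Matrix.IsHermitian, Matrix.conjTranspose_eq_transpose_of_trivial] at this
  have hBB : ∀ i, B i * B i = A i := fun i => (hA i).sqrt_mul_self
  have hrange : ∀ i, LinearMap.range (Matrix.toLin' (A i))
      = Submodule.span ℝ (Set.range (B i)ᵀ) := fun i =>
    range_toLin'_eq_span_sqrt_cols (hA i)
  have hexp : ∑ σ : Equiv.Perm (Fin n), (Matrix.of fun i j => A (σ j) i j).det
      = ∑ g : Fin n → Fin n, ((Matrix.of fun r i => B i r (g i)).det) ^ 2 := by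
    rw [← expansion B hBt]
    refine Finset.sum_congr rfl fun σ _ => ?_
    congr 1
    ext i j
    show A (σ j) i j = (B (σ j) * B (σ j)) i j
    rw [hBB]
  constructor
  · -- forward: positivity implies the dimension condition
    intro hpos s hs
    by_contra hlt
    push_neg at hlt
    set V := ⨆ i ∈ s, LinearMap.range (Matrix.toLin' (A i)) with hV
    have hzero : ∀ σ : Equiv.Perm (Fin n), (Matrix.of fun i j => A (σ j) i j).det = 0 := by
      intro σ
      by_contra hdet
      have hunit : IsUnit (Matrix.of fun i j => A (σ j) i j) :=
        (Matrix.isUnit_iff_isUnit_det _).2 (isUnit_iff_ne_zero.2 hdet)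
      have hcols : LinearIndependent ℝ
          (fun j => (Matrix.of fun i j => A (σ j) i j)ᵀ j) :=
        Matrix.linearIndependent_cols_iff_isUnit.2 hunit
      -- restrict to the columns with index in σ⁻¹(s)
      have hw : LinearIndependent ℝ
          (fun x : {i // i ∈ s} => (Matrix.of fun i j => A (σ j) i j)ᵀ (σ.symm x.1)) :=
        hcols.comp (fun x : {i // i ∈ s} => σ.symm x.1)
          (fun a b hab => Subtype.ext (σ.symm.injective hab))
      have hmem : ∀ x : {i // i ∈ s},
          (Matrix.of fun i j => A (σ j) i j)ᵀ (σ.symm x.1) ∈ V := by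
        intro x
        have hcol : (Matrix.of fun i j => A (σ j) i j)ᵀ (σ.symm x.1)
            = Matrix.toLin' (A x.1) (Pi.single (σ.symm x.1) 1) := by
          funext r
          rw [Matrix.toLin'_apply]
          simp [Matrix.mulVec_single, Matrix.transpose_apply]
        rw [hcol]
        have hle : LinearMap.range (Matrix.toLin' (A x.1)) ≤ V :=
          le_iSup₂ (f := fun i (_ : i ∈ s) => LinearMap.range (Matrix.toLin' (A i))) x.1 x.2
        exact hle (LinearMap.mem_range_self _ _)
      have hspanle : Submodule.span ℝ
          (Set.range fun x : {i // i ∈ s} =>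
            (Matrix.of fun i j => A (σ j) i j)ᵀ (σ.symm x.1)) ≤ V :=
        Submodule.span_le.2 (by rintro _ ⟨x, rfl⟩; exact hmem x)
      have hcard := linearIndependent_iff_card_eq_finrank_span.1 hw
      rw [Set.finrank] at hcard
      have : s.card ≤ finrank ℝ V := by
        rw [← Fintype.card_coe s, hcard]
        exact Submodule.finrank_mono hspanle
      omega
    have : mixedDisc n A = 0 := by
      unfold mixedDisc
      rw [Finset.sum_congr rfl fun σ _ => hzero σ]
      simp
    rw [this] at hpos
    exact lt_irrefl 0 hpos
  · -- backward: the dimension condition implies positivity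
    intro hcond
    -- set up Rado's theorem with the columns of the square roots
    set S : Fin n → Finset (Fin n → ℝ) :=
      fun i => Finset.image (fun k => (B i)ᵀ k) Finset.univ with hSdef
    have hScoe : ∀ i, (S i : Set (Fin n → ℝ)) = Set.range (B i)ᵀ := by
      intro i
      rw [hSdef]
      simp [Finset.coe_image]
    have hspn : ∀ s : Finset (Fin n), spn S s
        = ⨆ i ∈ s, LinearMap.range (Matrix.toLin' (A i)) := by
      intro s
      unfold spn
      rw [Submodule.span_iUnion₂]
      refine iSup_congr fun i => ?_
      refine iSup_congr fun hi => ?_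
      rw [hScoe, hrange]
    have hradoCond : ∀ s : Finset (Fin n), s.card ≤ finrank ℝ (spn S s) := by
      intro s
      rcases s.eq_empty_or_nonempty with rfl | hne
      · simp
      · rw [hspn]
        exact hcond s hne
    obtain ⟨v, hv, hli⟩ := rado_aux (∑ i, (S i).card) S le_rfl hradoCond
    -- extract the column indices
    have hg : ∀ i, ∃ k : Fin n, (B i)ᵀ k = v i := by
      intro i
      have := hv i
      rw [hSdef] at this
      simp only [Finset.mem_image, Finset.mem_univ, true_and] at this
      exact this
    choose g hgk using hg
    have hdetne : (Matrix.of fun r i => B i r (g i)).det ≠ 0 := by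
      have hT : (Matrix.of fun r i => B i r (g i))ᵀ = Matrix.of (fun i => v i) := by
        ext i j
        show B i j (g i) = v i j
        rw [← hgk i]
        rfl
      have hrows : LinearIndependent ℝ (fun i => (Matrix.of fun r i => B i r (g i))ᵀ i) := by
        rw [hT]
        exact hli
      have := Matrix.linearIndependent_rows_iff_isUnit.1 hrows
      have hdet := (Matrix.isUnit_iff_isUnit_det _).1 this
      rw [isUnit_iff_ne_zero] at hdet
      rw [← Matrix.det_transpose]; exact hdet
    -- conclude positivity
    unfold mixedDisc
    rw [hexp]
    have hsumpos : 0 < ∑ g' : Fin n → Fin n, ((Matrix.of fun r i => B i r (g' i)).det) ^ 2 := by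
      refine Finset.sum_pos' (fun g' _ => sq_nonneg _) ⟨g, Finset.mem_univ g, ?_⟩
      exact lt_of_le_of_ne (sq_nonneg _) (Ne.symm (pow_ne_zero 2 hdetne))
    exact mul_pos (inv_pos.2 (by exact_mod_cast Nat.factorial_pos n)) hsumpos
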